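/- Schwarz–Pick via von Neumann: Let p be a polynomial with sup_{|z|≤1}|p(z)| ≤ 1, and let a, c ∈ ℂ with |a| < 1, |c| < 1, a ≠ c, and b ∈ ℂ with |b|² = (1-|a|²)(1-|c|²). Then the 2×2 matrix A = [[a, b],[0, c]] satisfies ‖A‖ = 1 (operator 2-norm), p(A) = [[p(a), b·(p(a)-p(c))/(a-c)],[0, p(c)]], and the inequality ‖p(A)‖ ≤ 1 implies |(p(a)-p(c))/(a-c)|² ≤ ((1-|p(a)|²)/(1-|a|²))·((1-|p(c)|²)/(1-|c|²)). -/

import Mathlib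

open Complex Matrix Polynomial
open scoped Matrix.Norms.L2Operator

private theorem sp_key_ineq (α β γ s t : ℝ) (hα : 0 ≤ α) (hβ : 0 ≤ β) (hγ : 0 ≤ γ)
    (hα1 : α ≤ 1) (hγ1 : γ ≤ 1)
    (hβ2 : β^2 = (1-α^2)*(1-γ^2)) (hs : 0 ≤ s) (ht : 0 ≤ t) :
    (α*s + β*t)^2 + γ^2*t^2 ≤ s^2 + t^2 := by
  rcases eq_or_lt_of_le hα1 with h1 | h1
  · subst h1
    have hβ0 : β = 0 := by
      have h : β^2 = 0 := by rw [hβ2]; ring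
      exact pow_eq_zero_iff (two_ne_zero) |>.mp h
    subst hβ0
    nlinarith [mul_nonneg (by nlinarith : (0:ℝ) ≤ 1 - γ^2) (sq_nonneg t)]
  · have h2 : 0 < 1 - α^2 := by nlinarith
    nlinarith [sq_nonneg ((1-α^2)*s - α*β*t), mul_pos h2 h2, sq_nonneg (α*β*t)]

private theorem sp_key2 (u v w : ℝ) (hu : 0 ≤ u) (hv : 0 ≤ v) (hw : 0 ≤ w)
    (hu1 : u ≤ 1) (hw1 : w ≤ 1)
    (H : ∀ t s : ℝ, v^2*(u^2*t+s)^2 + w^2*s^2 ≤ u^2*v^2*t^2 + s^2) :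
    v^2 ≤ (1-u^2)*(1-w^2) := by
  have HQ : ∀ t s : ℝ, 0 ≤ (u^2*v^2*(1-u^2))*t^2 - 2*(u^2*v^2)*t*s + (1-v^2-w^2)*s^2 := by
    intro t s; nlinarith [H t s]
  have h01 := H 0 1
  by_cases hv0 : v = 0
  · subst hv0
    nlinarith [mul_nonneg (by nlinarith : (0:ℝ) ≤ 1-u^2) (by nlinarith : (0:ℝ) ≤ 1-w^2)]
  · have hv2 : 0 < v := lt_of_le_of_ne hv (Ne.symm hv0)
    by_cases hu0 : u = 0
    · subst hu0; nlinarith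
    · have hu2 : 0 < u := lt_of_le_of_ne hu (Ne.symm hu0)
      rcases eq_or_lt_of_le hu1 with h1 | h1
      · exfalso
        subst h1
        have := HQ (1 + (1-v^2-w^2)) (2*v^2)
        nlinarith [pow_pos hv2 4]
      · have hA : 0 < u^2*v^2*(1-u^2) := mul_pos (by positivity) (by nlinarith)
        have h3 : (u^2*v^2)^2 ≤ (1-v^2-w^2)*(u^2*v^2*(1-u^2)) := by
          nlinarith [HQ (u^2*v^2) (u^2*v^2*(1-u^2)), hA]
        nlinarith [h3, mul_pos (mul_pos hu2 hu2) (mul_pos hv2 hv2)]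

private theorem sp_normSq_symm (y : Fin 2 → ℂ) :
    ‖(EuclideanSpace.equiv (Fin 2) ℂ).symm y‖^2 = ‖y 0‖^2 + ‖y 1‖^2 := by
  rw [EuclideanSpace.norm_eq, Real.sq_sqrt (by positivity)]
  simp [Fin.sum_univ_two]

private theorem sp_normSq (x : EuclideanSpace ℂ (Fin 2)) :
    ‖x‖^2 = ‖x 0‖^2 + ‖x 1‖^2 := by
  rw [EuclideanSpace.norm_eq, Real.sq_sqrt (by positivity)]
  simp [Fin.sum_univ_two]

private theorem sp_mulVec_two (α β γ x0 x1 : ℂ) :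
    !![α,β;0,γ] *ᵥ ![x0,x1] = ![α*x0+β*x1, γ*x1] := by
  funext i
  fin_cases i <;> simp [Matrix.mulVec, dotProduct, Fin.sum_univ_two]

private theorem sp_opnorm_le_one (M : Matrix (Fin 2) (Fin 2) ℂ)
    (h : ∀ x : EuclideanSpace ℂ (Fin 2),
      ‖(EuclideanSpace.equiv (Fin 2) ℂ).symm (M *ᵥ (WithLp.equiv 2 (Fin 2 → ℂ) x))‖ ≤ ‖x‖) :
    ‖M‖ ≤ 1 := by
  rw [Matrix.l2_opNorm_def]
  apply ContinuousLinearMap.opNorm_le_bound _ zero_le_one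
  intro x
  rw [one_mul]
  simpa [Matrix.toEuclideanLin_apply] using h x

private theorem sp_opnorm_ge (M : Matrix (Fin 2) (Fin 2) ℂ) (x : EuclideanSpace ℂ (Fin 2))
    (hx : 0 < ‖x‖)
    (h : ‖x‖ ≤ ‖(EuclideanSpace.equiv (Fin 2) ℂ).symm (M *ᵥ (WithLp.equiv 2 (Fin 2 → ℂ) x))‖) :
    1 ≤ ‖M‖ := by
  have h2 := M.l2_opNorm_mulVec x
  have h3 : ‖x‖ ≤ ‖M‖ * ‖x‖ := h.trans h2
  nlinarith

private theorem sp_pow_formula (a b c : ℂ) (hac : a - c ≠ 0) (n : ℕ) :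
    (!![a,b;0,c])^n = !![a^n, b*(a^n - c^n)/(a-c); 0, c^n] := by
  induction n with
  | zero => simp [Matrix.one_fin_two]
  | succ n ih =>
    rw [pow_succ, ih, Matrix.mul_fin_two]
    ext i j
    fin_cases i <;> fin_cases j <;> simp <;> (try field_simp) <;> (try ring)

private theorem sp_aeval_formula (a b c : ℂ) (hac : a - c ≠ 0) (p : Polynomial ℂ) :
    Polynomial.aeval (!![a,b;0,c]) p =
      !![p.eval a, b * (p.eval a - p.eval c) / (a - c); 0, p.eval c] := by
  induction p using Polynomial.induction_on' with
  | add p q hp hq =>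
    rw [map_add, hp, hq]
    ext i j
    fin_cases i <;> fin_cases j <;> simp <;> (try field_simp) <;> (try ring)
  | monomial n k =>
    rw [Polynomial.aeval_monomial, sp_pow_formula a b c hac n, ← Algebra.smul_def]
    ext i j
    fin_cases i <;> fin_cases j <;>
      simp [Polynomial.eval_monomial, smul_eq_mul] <;> (try field_simp) <;> (try ring)

-- pointwise consequence of ‖M‖ ≤ 1 for upper triangular M, specialized vectors
private theorem sp_H_of_norm_le (α β γ : ℂ) (h : ‖!![α,β;0,γ]‖ ≤ 1) (t s : ℝ) :
    (‖β‖)^2*((‖α‖)^2*t+s)^2 + (‖γ‖)^2*s^2 ≤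
      (‖α‖)^2*(‖β‖)^2*t^2 + s^2 := by
  set x : EuclideanSpace ℂ (Fin 2) :=
    (WithLp.equiv 2 (Fin 2 → ℂ)).symm ![(starRingEnd ℂ) α * β * (t:ℂ), (s:ℂ)] with hxdef
  have hle : ‖(EuclideanSpace.equiv (Fin 2) ℂ).symm
      (!![α,β;0,γ] *ᵥ ![(starRingEnd ℂ) α * β * (t:ℂ), (s:ℂ)])‖ ≤ ‖!![α,β;0,γ]‖ * ‖x‖ :=
    (!![α,β;0,γ]).l2_opNorm_mulVec x
  have hle2 : ‖(EuclideanSpace.equiv (Fin 2) ℂ).symm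
      (!![α,β;0,γ] *ᵥ ![(starRingEnd ℂ) α * β * (t:ℂ), (s:ℂ)])‖ ≤ ‖x‖ :=
    hle.trans (mul_le_of_le_one_left (norm_nonneg x) h)
  have hαα : α * (starRingEnd ℂ) α = ((‖α‖ : ℂ))^2 := by
    rw [Complex.mul_conj, Complex.normSq_eq_norm_sq]; push_cast; ring
  have hentry : α * ((starRingEnd ℂ) α * β * (t:ℂ)) + β * (s:ℂ)
      = β * ((((‖α‖)^2*t+s : ℝ)) : ℂ) := by
    push_cast
    linear_combination (β * (t:ℂ)) * hαα
  have hMx : ‖(EuclideanSpace.equiv (Fin 2) ℂ).symm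
      (!![α,β;0,γ] *ᵥ ![(starRingEnd ℂ) α * β * (t:ℂ), (s:ℂ)])‖^2
      = (‖β‖)^2*((‖α‖)^2*t+s)^2 + (‖γ‖)^2*s^2 := by
    rw [sp_mulVec_two, sp_normSq_symm]
    simp only [Matrix.cons_val_zero, Matrix.cons_val_one, Matrix.head_cons, hentry]
    simp only [norm_mul, Complex.norm_real, Real.norm_eq_abs, mul_pow, _root_.sq_abs]
  have hx2 : ‖x‖^2 = (‖α‖)^2*(‖β‖)^2*t^2 + s^2 := by
    rw [sp_normSq]
    have h0 : x 0 = (starRingEnd ℂ) α * β * (t:ℂ) := rfl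
    have h1 : x 1 = (s:ℂ) := rfl
    rw [h0, h1]
    simp only [norm_mul, Complex.norm_real, Real.norm_eq_abs, mul_pow, _root_.sq_abs,
      Complex.norm_conj]
    try ring
  calc (‖β‖)^2*((‖α‖)^2*t+s)^2 + (‖γ‖)^2*s^2
      = ‖(EuclideanSpace.equiv (Fin 2) ℂ).symm
        (!![α,β;0,γ] *ᵥ ![(starRingEnd ℂ) α * β * (t:ℂ), (s:ℂ)])‖^2 := hMx.symm
    _ ≤ ‖x‖^2 := by
        nlinarith [hle2, norm_nonneg ((EuclideanSpace.equiv (Fin 2) ℂ).symm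
          (!![α,β;0,γ] *ᵥ ![(starRingEnd ℂ) α * β * (t:ℂ), (s:ℂ)])), norm_nonneg x]
    _ = _ := hx2

theorem schwarz_pick_via_vonNeumann (p : Polynomial ℂ)
    (hp : ∀ z : ℂ, ‖z‖ ≤ 1 → ‖p.eval z‖ ≤ 1)
    (a b c : ℂ) (ha : ‖a‖ < 1) (hc : ‖c‖ < 1) (hac : a ≠ c)
    (hb : ‖b‖ ^ 2 = (1 - ‖a‖ ^ 2) * (1 - ‖c‖ ^ 2)) :
    let A : Matrix (Fin 2) (Fin 2) ℂ := !![a, b; 0, c]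
    ‖A‖ = 1 ∧
    Polynomial.aeval A p =
      !![p.eval a, b * (p.eval a - p.eval c) / (a - c); 0, p.eval c] ∧
    (‖Polynomial.aeval A p‖ ≤ 1 →
      ‖(p.eval a - p.eval c) / (a - c)‖ ^ 2 ≤
        ((1 - ‖p.eval a‖ ^ 2) / (1 - ‖a‖ ^ 2)) *
          ((1 - ‖p.eval c‖ ^ 2) / (1 - ‖c‖ ^ 2))) := by
  intro A
  have hac' : a - c ≠ 0 := sub_ne_zero.mpr hac
  have ha2 : (0:ℝ) < 1 - ‖a‖ ^ 2 := by nlinarith [norm_nonneg a]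
  have hc2 : (0:ℝ) < 1 - ‖c‖ ^ 2 := by nlinarith [norm_nonneg c]
  refine ⟨?_, sp_aeval_formula a b c hac' p, ?_⟩
  · -- norm A = 1
    apply le_antisymm
    · apply sp_opnorm_le_one
      intro x
      have hMx : ‖(EuclideanSpace.equiv (Fin 2) ℂ).symm
          (A *ᵥ (WithLp.equiv 2 (Fin 2 → ℂ) x))‖^2
          = ‖a * x 0 + b * x 1‖^2 + ‖c * x 1‖^2 := by
        show ‖(EuclideanSpace.equiv (Fin 2) ℂ).symm (!![a,b;0,c] *ᵥ ![x 0, x 1])‖^2 = _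
        rw [sp_mulVec_two, sp_normSq_symm]
        simp
      have hx2 := sp_normSq x
      refine le_of_pow_le_pow_left₀ two_ne_zero (norm_nonneg x) ?_
      rw [hMx, hx2]
      calc ‖a * x 0 + b * x 1‖^2 + ‖c * x 1‖^2
          ≤ (‖a‖ * ‖x 0‖ + ‖b‖ * ‖x 1‖)^2 + (‖c‖)^2 * ‖x 1‖^2 := by
            have h1 : ‖a * x 0 + b * x 1‖ ≤ ‖a‖ * ‖x 0‖ + ‖b‖ * ‖x 1‖ := by
              refine (norm_add_le _ _).trans ?_
              rw [norm_mul, norm_mul]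
            have h2 : ‖c * x 1‖^2 = (‖c‖)^2 * ‖x 1‖^2 := by
              rw [norm_mul, mul_pow]
            nlinarith [norm_nonneg (a * x 0 + b * x 1), h1,
              mul_nonneg (norm_nonneg a) (norm_nonneg (x 0)),
              mul_nonneg (norm_nonneg b) (norm_nonneg (x 1))]
        _ ≤ ‖x 0‖^2 + ‖x 1‖^2 :=
            sp_key_ineq (‖a‖) (‖b‖) (‖c‖) (‖x 0‖) (‖x 1‖)
              (norm_nonneg a) (norm_nonneg b) (norm_nonneg c)
              (le_of_lt ha) (le_of_lt hc) hb (norm_nonneg _) (norm_nonneg _)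
    · -- lower bound
      set x : EuclideanSpace ℂ (Fin 2) :=
        (WithLp.equiv 2 (Fin 2 → ℂ)).symm
          ![(starRingEnd ℂ) a * b, ((1 - ‖a‖ ^ 2 : ℝ):ℂ)] with hxdef
      have hx2 : ‖x‖^2 = (‖a‖)^2*(‖b‖)^2 + (1 - ‖a‖ ^ 2)^2 := by
        rw [sp_normSq]
        have h0 : x 0 = (starRingEnd ℂ) a * b := rfl
        have h1 : x 1 = ((1 - ‖a‖ ^ 2 : ℝ):ℂ) := rfl
        rw [h0, h1]
        simp only [norm_mul, Complex.norm_real, Real.norm_eq_abs, mul_pow,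
          _root_.sq_abs, Complex.norm_conj]
      have hxpos : 0 < ‖x‖ := by
        have h2 : 0 < ‖x‖^2 := by rw [hx2]; positivity
        nlinarith [norm_nonneg x]
      apply sp_opnorm_ge A x hxpos
      have hαα : a * (starRingEnd ℂ) a = ((‖a‖ : ℂ))^2 := by
        rw [Complex.mul_conj, Complex.normSq_eq_norm_sq]; push_cast; ring
      have hentry : a * ((starRingEnd ℂ) a * b) + b * ((1 - ‖a‖ ^ 2 : ℝ):ℂ) = b := by
        push_cast
        linear_combination b * hαα
      have hMx : ‖(EuclideanSpace.equiv (Fin 2) ℂ).symm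
          (A *ᵥ (WithLp.equiv 2 (Fin 2 → ℂ) x))‖^2
          = (‖b‖)^2 + (‖c‖)^2 * (1 - ‖a‖ ^ 2)^2 := by
        show ‖(EuclideanSpace.equiv (Fin 2) ℂ).symm
          (!![a,b;0,c] *ᵥ ![(starRingEnd ℂ) a * b, ((1 - ‖a‖ ^ 2 : ℝ):ℂ)])‖^2 = _
        rw [sp_mulVec_two, sp_normSq_symm]
        simp only [Matrix.cons_val_zero, Matrix.cons_val_one, Matrix.head_cons, hentry]
        simp only [norm_mul, Complex.norm_real, Real.norm_eq_abs, mul_pow,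
          _root_.sq_abs]
      refine le_of_pow_le_pow_left₀ two_ne_zero (norm_nonneg _) ?_
      rw [hMx, hx2]
      apply le_of_eq
      linear_combination (-(1:ℝ) + ‖a‖ ^ 2) * hb
  · -- part 3
    intro hM
    rw [sp_aeval_formula a b c hac' p] at hM
    set α := p.eval a with hα
    set γ := p.eval c with hγ
    set β := b * (α - γ) / (a - c) with hβ
    have H := sp_H_of_norm_le α β γ hM
    have hv2 : (‖β‖)^2 ≤ (1 - (‖α‖)^2) * (1 - (‖γ‖)^2) :=
      sp_key2 (‖α‖) (‖β‖) (‖γ‖)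
        (norm_nonneg _) (norm_nonneg _) (norm_nonneg _)
        (hp a (le_of_lt ha)) (hp c (le_of_lt hc)) H
    have hbd : ‖β‖ = ‖b‖ * ‖((α - γ)/(a-c))‖ := by
      rw [hβ, mul_div_assoc]
      exact norm_mul _ _
    rw [div_mul_div_comm, le_div_iff₀ (by positivity)]
    calc ‖((α - γ)/(a-c))‖^2 * ((1 - ‖a‖ ^ 2) * (1 - ‖c‖ ^ 2))
        = (‖β‖)^2 := by rw [hbd, mul_pow, hb]; ring
      _ ≤ _ := hv2
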